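/- Let R > 0 and c₁, c₂ ∈ E with d = dist c₁ c₂ satisfying d < 2R, and set D = Metric.closedBall c₁ R ∩ Metric.closedBall c₂ R (a lune). Then the perimeter of D equals 4·R·arccos(d/(2R)), that is, μH[1] (frontier D) = ENNReal.ofReal (4·R·Real.arccos (d/(2R))). -/

import Mathlib

open scoped MeasureTheory
open MeasureTheory Set Metric
open scoped ENNReal NNReal Topology

noncomputable section
namespace LuneAux
open Complex Real

lemma dist_exp_exp (θ ψ : ℝ) :
    dist (Complex.exp (θ * I)) (Complex.exp (ψ * I)) = 2 * |Real.sin ((θ - ψ)/2)| := by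
  have e : ∀ t : ℝ, Complex.exp (t * I) = (Real.cos t : ℂ) + (Real.sin t : ℂ) * I := by
    intro t; rw [Complex.exp_mul_I, Complex.ofReal_cos, Complex.ofReal_sin]
  rw [Complex.dist_eq, e, e]
  have h : ((Real.cos θ : ℂ) + (Real.sin θ : ℂ) * I - ((Real.cos ψ : ℂ) + (Real.sin ψ : ℂ) * I))
      = ((Real.cos θ - Real.cos ψ : ℝ) : ℂ) + ((Real.sin θ - Real.sin ψ : ℝ) : ℂ) * I := by
    push_cast; ring
  rw [h, Complex.norm_def, Complex.normSq_add_mul_I]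
  have key : (Real.cos θ - Real.cos ψ)^2 + (Real.sin θ - Real.sin ψ)^2
      = (2 * |Real.sin ((θ - ψ)/2)|)^2 := by
    have hc := Real.cos_sub_cos θ ψ
    have hs := Real.sin_sub_sin θ ψ
    have hp := Real.sin_sq_add_cos_sq ((θ+ψ)/2)
    have ha := _root_.sq_abs (Real.sin ((θ-ψ)/2))
    rw [hc, hs]; rw [mul_pow 2 |Real.sin ((θ-ψ)/2)|, ha]; linear_combination (4 * Real.sin ((θ-ψ)/2)^2) * hp
  rw [key, Real.sqrt_sq (by positivity)]


lemma lipschitz_exp_I : LipschitzWith 1 (fun θ : ℝ => Complex.exp (θ * I)) := by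
  refine LipschitzWith.of_dist_le_mul fun θ ψ => ?_
  rw [dist_exp_exp, Real.dist_eq, NNReal.coe_one]
  rw [one_mul]
  calc 2 * |Real.sin ((θ - ψ)/2)| ≤ 2 * |(θ - ψ)/2| := by
        have := Real.abs_sin_le_abs (x := (θ - ψ)/2); linarith
    _ = |θ - ψ| := by rw [abs_div]; simp; ring

lemma le_hausdorff_of_preconnected {s : Set ℂ} (hs : IsPreconnected s) {x y : ℂ}
    (hx : x ∈ s) (hy : y ∈ s) : ENNReal.ofReal (dist x y) ≤ μH[1] s := by
  rcases eq_or_ne x y with rfl | hxy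
  · simp
  have habs : ‖y - x‖ ≠ 0 := by
    simpa [sub_eq_zero] using (fun h => hxy h.symm)
  set u : ℂ := (y - x) / ‖y - x‖ with hu
  have hu1 : ‖u‖ = 1 := by
    rw [hu, norm_div, Complex.norm_real, norm_norm]
    field_simp
  set g : ℂ → ℝ := fun z => ((starRingEnd ℂ) u * z).re with hg
  have hlip : LipschitzWith 1 g := by
    refine LipschitzWith.of_dist_le_mul fun z w => ?_
    rw [NNReal.coe_one, one_mul, Real.dist_eq, hg]
    have : ((starRingEnd ℂ) u * z).re - ((starRingEnd ℂ) u * w).re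
        = ((starRingEnd ℂ) u * (z - w)).re := by simp [mul_sub]
    rw [this]
    calc |((starRingEnd ℂ) u * (z - w)).re| ≤ ‖(starRingEnd ℂ) u * (z - w)‖ :=
          Complex.abs_re_le_norm _
      _ = dist z w := by rw [norm_mul, Complex.norm_conj, hu1, one_mul, Complex.dist_eq]
  have him : μH[1] (g '' s) ≤ μH[1] s := by
    simpa using hlip.hausdorffMeasure_image_le zero_le_one s
  have hdiff : g y - g x = dist x y := by
    have : g y - g x = ((starRingEnd ℂ) u * (y - x)).re := by simp [hg, mul_sub]
    rw [this, hu]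
    have : (starRingEnd ℂ) ((y - x) / (‖y - x‖ : ℂ)) * (y - x)
        = ((‖y - x‖ : ℝ) : ℂ) := by
      rw [map_div₀, Complex.conj_ofReal, div_mul_eq_mul_div, ← Complex.normSq_eq_conj_mul_self]
      rw [Complex.normSq_eq_norm_sq]
      push_cast
      rw [div_eq_iff (by exact_mod_cast habs)]
      ring
    rw [this, Complex.ofReal_re, Complex.dist_eq, ← norm_neg, neg_sub]
  have hIcc : Icc (g x) (g y) ⊆ g '' s :=
    (hs.image g hlip.continuous.continuousOn).Icc_subset ⟨x, hx, rfl⟩ ⟨y, hy, rfl⟩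
  calc ENNReal.ofReal (dist x y) = volume (Icc (g x) (g y)) := by
        rw [Real.volume_Icc, hdiff]
    _ ≤ volume (g '' s) := measure_mono hIcc
    _ = μH[1] (g '' s) := by rw [MeasureTheory.hausdorffMeasure_real]
    _ ≤ μH[1] s := him


lemma exp_eq_exp_real {s t : ℝ} (h : Complex.exp (s*I) = Complex.exp (t*I)) :
    ∃ k : ℤ, t - s = 2*π*k := by
  rw [Complex.exp_eq_exp_iff_exists_int] at h
  obtain ⟨n, hn⟩ := h
  refine ⟨-n, ?_⟩
  have : ((s : ℂ) - t - n * (2*π)) * I = 0 := by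
    rw [sub_mul, sub_mul, hn]; push_cast; ring
  rcases mul_eq_zero.1 this with h' | h'
  · have : (s : ℂ) - t - n*(2*π) = ((s - t - n*(2*π) : ℝ) : ℂ) := by push_cast; ring
    rw [this] at h'
    have := Complex.ofReal_eq_zero.1 h'
    push_cast
    linarith
  · exact absurd h' I_ne_zero

lemma arc0 (R : ℝ) (hR : 0 < R) {a b : ℝ} (hab : a ≤ b) (h2 : b - a ≤ 2*π) :
    μH[1] ((fun θ : ℝ => (R:ℂ) * Complex.exp (θ * I)) '' Icc a b)
      = ENNReal.ofReal (R*(b-a)) := by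
  haveI : NullSingletonClass (μH[1] : Measure ℂ) := MeasureTheory.Measure.nullSingletonClass_hausdorff ℂ one_pos
  set f : ℝ → ℂ := fun θ => (R:ℂ) * Complex.exp (θ * I) with hf
  have hRne : (R:ℂ) ≠ 0 := by exact_mod_cast hR.ne'
  have hdistf : ∀ θ ψ : ℝ, dist (f θ) (f ψ) = R * (2 * |Real.sin ((θ - ψ)/2)|) := by
    intro θ ψ
    rw [hf]
    simp only [Complex.dist_eq, ← mul_sub, norm_mul, Complex.norm_real, Real.norm_eq_abs, abs_of_pos hR]
    rw [← Complex.dist_eq, dist_exp_exp]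
  have hlipf : LipschitzWith R.toNNReal f := by
    refine LipschitzWith.of_dist_le_mul fun θ ψ => ?_
    rw [hdistf, Real.coe_toNNReal _ hR.le, Real.dist_eq]
    have h1 : |Real.sin ((θ - ψ)/2)| ≤ |(θ - ψ)/2| := Real.abs_sin_le_abs
    have h2 : 2 * |(θ - ψ)/2| = |θ - ψ| := by rw [abs_div]; simp; ring
    nlinarith [abs_nonneg ((θ-ψ)/2)]
  have hcontf : Continuous f := by
    rw [hf]; continuity
  -- upper bound
  have up : μH[1] (f '' Icc a b) ≤ ENNReal.ofReal (R*(b-a)) := by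
    have h := hlipf.hausdorffMeasure_image_le zero_le_one (Icc a b)
    rw [MeasureTheory.hausdorffMeasure_real] at h
    calc μH[1] (f '' Icc a b) ≤ (R.toNNReal : ℝ≥0∞) ^ (1:ℝ) * volume (Icc a b) := h
      _ = ENNReal.ofReal R * ENNReal.ofReal (b - a) := by
          rw [ENNReal.rpow_one, Real.volume_Icc]; rfl
      _ = ENNReal.ofReal (R*(b-a)) := (ENNReal.ofReal_mul hR.le).symm
  -- lower bound for each n
  have key : ∀ n : ℕ, 1 ≤ n →
      ENNReal.ofReal ((n:ℝ) * (2*R*Real.sin ((b-a)/(2*n)))) ≤ μH[1] (f '' Icc a b) := by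
    intro n hn
    have hn0 : (0:ℝ) < n := by exact_mod_cast hn
    set δ : ℝ := (b-a)/n with hδ
    have hδ0 : 0 ≤ δ := div_nonneg (by linarith) hn0.le
    have hn1 : (1:ℝ) ≤ n := by exact_mod_cast hn
    have hδπ : δ ≤ 2*π := by
      rw [hδ, div_le_iff₀ hn0]
      nlinarith [Real.pi_pos]
    set t : ℕ → ℝ := fun i => a + i*δ with ht
    have htmono : ∀ i j : ℕ, i ≤ j → t i ≤ t j := by
      intro i j hij
      have : (i:ℝ) ≤ j := by exact_mod_cast hij
      simp only [ht]
      nlinarith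
    have htn : t n = b := by
      simp only [ht, hδ]
      field_simp; ring
    have ht0 : t 0 = a := by simp [ht]
    have htsucc : ∀ i : ℕ, t (i+1) - t i = δ := by
      intro i; simp only [ht]; push_cast; ring
    set P : ℕ → Set ℂ := fun i => f '' Icc (t i) (t (i+1)) \ {f (t (i+1))} with hP
    have hmeas : ∀ i, MeasurableSet (P i) := by
      intro i
      exact ((isCompact_Icc.image hcontf).isClosed.measurableSet).diff
        (measurableSet_singleton _)
    have hsub : ∀ i, i < n → P i ⊆ f '' Icc a b := by
      intro i hi
      refine (diff_subset).trans (image_mono ?_)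
      apply Icc_subset_Icc
      · rw [← ht0]; exact htmono 0 i (Nat.zero_le _)
      · rw [← htn]; exact htmono (i+1) n hi
    have hdisj' : ∀ i j, i < j → j < n → Disjoint (P i) (P j) := by
      intro i j hij hjn
      rw [Set.disjoint_left]
      rintro z ⟨⟨s', hs', rfl⟩, hzi⟩ ⟨⟨t', ht', hft⟩, hzj⟩
      have hexp : Complex.exp (t'*I) = Complex.exp (s'*I) := by
        have := mul_left_cancel₀ hRne hft
        exact this
      obtain ⟨k, hk⟩ := exp_eq_exp_real hexp
      -- s' - t' = 2πk ; here hk : s' - t' = 2πk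
      have hts : t' - s' ≥ 0 := by
        have h1 : s' ≤ t (i+1) := hs'.2
        have h2 : t (i+1) ≤ t j := htmono _ _ hij
        have h3 : t j ≤ t' := ht'.1
        linarith
      have hts2 : t' - s' ≤ 2*π := by
        have h1 : t i ≤ s' := hs'.1
        have h2 : t' ≤ t (j+1) := ht'.2
        have h3 : a ≤ t i := by rw [← ht0]; exact htmono 0 i (Nat.zero_le _)
        have h4 : t (j+1) ≤ b := by rw [← htn]; exact htmono (j+1) n hjn
        linarith
      -- hk is about s' - t' ; check orientation below
      have hk0 : k = 0 ∨ k = -1 := by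
        have hπ := Real.pi_pos
        have hle : k ≤ 0 := by
          by_contra hc
          push_neg at hc
          have h1k : (1:ℝ) ≤ (k:ℝ) := by exact_mod_cast hc
          nlinarith [hk]
        have hge : -1 ≤ k := by
          by_contra hc
          push_neg at hc
          have h1k : (k:ℝ) ≤ -2 := by exact_mod_cast (by omega : k ≤ -2)
          nlinarith [hk]
        omega
      rcases hk0 with rfl | rfl
      · -- t' = s'
        have hts' : t' = s' := by push_cast at hk; linarith
        have h1 : s' ≤ t (i+1) := hs'.2
        have h2 : t (i+1) ≤ t j := htmono _ _ hij
        have h3 : t j ≤ t' := ht'.1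
        have : s' = t (i+1) := by linarith
        exact hzi (by rw [this]; exact Set.mem_singleton _)
      · -- t' - s' = 2π : forces t' = t (j+1)
        have h2π : t' - s' = 2*π := by push_cast at hk; linarith
        have h1 : t i ≤ s' := hs'.1
        have h2 : t' ≤ t (j+1) := ht'.2
        have h3 : a ≤ t i := by rw [← ht0]; exact htmono 0 i (Nat.zero_le _)
        have h4 : t (j+1) ≤ b := by rw [← htn]; exact htmono (j+1) n hjn
        have : t' = t (j+1) := by linarith
        exact hzj (by rw [← hft, this]; exact Set.mem_singleton _)
    have hdisj : (↑(Finset.range n) : Set ℕ).PairwiseDisjoint P := by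
      intro i hi j hj hij
      simp only [Finset.coe_range, mem_Iio] at hi hj
      rcases lt_or_gt_of_ne hij with h | h
      · exact hdisj' i j h hj
      · exact (hdisj' j i h hi).symm
    have hlow : ∀ i, ENNReal.ofReal (2*R*Real.sin (δ/2)) ≤ μH[1] (P i) := by
      intro i
      have hnull : μH[1] ({f (t (i+1))} : Set ℂ) = 0 := measure_singleton _
      rw [hP]
      simp only
      rw [measure_diff_null hnull]
      have hconn : IsPreconnected (f '' Icc (t i) (t (i+1))) :=
        isPreconnected_Icc.image f hcontf.continuousOn
      have hx : f (t i) ∈ f '' Icc (t i) (t (i+1)) :=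
        mem_image_of_mem f (left_mem_Icc.2 (by linarith [htsucc i, hδ0]))
      have hy : f (t (i+1)) ∈ f '' Icc (t i) (t (i+1)) :=
        mem_image_of_mem f (right_mem_Icc.2 (by linarith [htsucc i, hδ0]))
      have hd : dist (f (t i)) (f (t (i+1))) = 2*R*Real.sin (δ/2) := by
        rw [hdistf]
        have heq : (t i - t (i+1))/2 = -(δ/2) := by rw [← htsucc i]; ring
        rw [heq, Real.sin_neg, abs_neg, _root_.abs_of_nonneg
          (Real.sin_nonneg_of_nonneg_of_le_pi (by linarith) (by linarith [Real.pi_pos]))]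
        ring
      calc ENNReal.ofReal (2*R*Real.sin (δ/2)) = ENNReal.ofReal (dist (f (t i)) (f (t (i+1)))) := by rw [hd]
        _ ≤ μH[1] (f '' Icc (t i) (t (i+1))) := le_hausdorff_of_preconnected hconn hx hy
    calc ENNReal.ofReal ((n:ℝ) * (2*R*Real.sin ((b-a)/(2*n))))
        = ∑ _i ∈ Finset.range n, ENNReal.ofReal (2*R*Real.sin (δ/2)) := by
          rw [Finset.sum_const, Finset.card_range, nsmul_eq_mul,
            ← ENNReal.ofReal_natCast n, ← ENNReal.ofReal_mul (by positivity)]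
          congr 1
          have hhalf : δ/2 = (b-a)/(2*n) := by rw [hδ]; ring
          rw [hhalf]
      _ ≤ ∑ i ∈ Finset.range n, μH[1] (P i) := Finset.sum_le_sum (fun i _ => hlow i)
      _ = μH[1] (⋃ i ∈ Finset.range n, P i) :=
          (measure_biUnion_finset hdisj (fun i _ => hmeas i)).symm
      _ ≤ μH[1] (f '' Icc a b) := by
          apply measure_mono
          exact Set.iUnion₂_subset fun i hi => hsub i (Finset.mem_range.1 hi)
  -- take limit
  refine le_antisymm up ?_
  rcases eq_or_lt_of_le hab with rfl | hlt
  · simp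
  have hL : 0 < b - a := by linarith
  have hlim : Filter.Tendsto (fun n : ℕ => (n:ℝ) * (2*R*Real.sin ((b-a)/(2*n))))
      Filter.atTop (𝓝 (R*(b-a))) := by
    have hslope : Filter.Tendsto (fun x : ℝ => Real.sin x / x) (nhdsWithin 0 {0}ᶜ) (𝓝 1) := by
      have h := (Real.hasDerivAt_sin 0)
      rw [hasDerivAt_iff_tendsto_slope] at h
      simp only [Real.cos_zero] at h
      refine h.congr fun y => ?_
      simp [slope_def_field]
    have hh : Filter.Tendsto (fun n : ℕ => (b-a)/(2*n)) Filter.atTop (nhdsWithin 0 {0}ᶜ) := by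
      rw [tendsto_nhdsWithin_iff]
      constructor
      · have h0 : (fun n : ℕ => (b-a)/(2*(n:ℝ))) = fun n : ℕ => ((b-a)/2)/(n:ℝ) := by
          funext n; ring
        rw [h0]
        exact tendsto_const_div_atTop_nhds_zero_nat _
      · filter_upwards [Filter.eventually_ge_atTop 1] with n hn
        have hn0 : (0:ℝ) < n := by exact_mod_cast hn
        simp only [mem_compl_iff, mem_singleton_iff]
        positivity
    have hcomp : Filter.Tendsto (fun n : ℕ => Real.sin ((b-a)/(2*n)) / ((b-a)/(2*n)))
        Filter.atTop (𝓝 1) := hslope.comp hh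
    have := hcomp.const_mul (R*(b-a))
    rw [mul_one] at this
    refine this.congr' ?_
    filter_upwards [Filter.eventually_ge_atTop 1] with n hn
    have hn0 : (0:ℝ) < n := by exact_mod_cast hn
    have hne : (b-a)/(2*n) ≠ 0 := by positivity
    field_simp
  have hlim2 : Filter.Tendsto (fun n : ℕ => ENNReal.ofReal ((n:ℝ) * (2*R*Real.sin ((b-a)/(2*n)))))
      Filter.atTop (𝓝 (ENNReal.ofReal (R*(b-a)))) :=
    (ENNReal.continuous_ofReal.tendsto _).comp hlim
  refine le_of_tendsto hlim2 ?_
  filter_upwards [Filter.eventually_ge_atTop 1] with n hn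
  exact key n hn


lemma arc_measure (R : ℝ) (hR : 0 < R) (c w : ℂ) (hw : ‖w‖ = 1) {a b : ℝ}
    (hab : a ≤ b) (h2 : b - a ≤ 2*π) :
    μH[1] ((fun θ : ℝ => c + w * ((R:ℂ) * Complex.exp (θ * I))) '' Icc a b)
      = ENNReal.ofReal (R*(b-a)) := by
  have hiso : Isometry (fun z : ℂ => c + w * z) := by
    refine Isometry.of_dist_eq fun z z' => ?_
    simp only [Complex.dist_eq, add_sub_add_left_eq_sub, ← mul_sub, norm_mul, hw, one_mul]
  have himg : (fun θ : ℝ => c + w * ((R:ℂ) * Complex.exp (θ * I))) '' Icc a b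
      = (fun z : ℂ => c + w * z) '' ((fun θ : ℝ => (R:ℂ) * Complex.exp (θ * I)) '' Icc a b) := by
    rw [← Set.image_comp]; rfl
  rw [himg, hiso.hausdorffMeasure_image (Or.inl zero_le_one), arc0 R hR hab h2]

lemma abs_le_iff_normSq {z : ℂ} {R : ℝ} (hR : 0 ≤ R) :
    ‖z‖ ≤ R ↔ Complex.normSq z ≤ R^2 := by
  rw [← Complex.sq_norm]
  constructor
  · intro h; nlinarith [norm_nonneg z]
  · intro h; nlinarith [norm_nonneg z]

lemma normSq_R_exp_sub (R d θ : ℝ) :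
    Complex.normSq ((R:ℂ) * Complex.exp (θ*I) - (d:ℂ))
      = R^2 - 2*R*d*Real.cos θ + d^2 := by
  have e : (R:ℂ) * Complex.exp (θ*I) - (d:ℂ)
      = ((R*Real.cos θ - d : ℝ):ℂ) + ((R*Real.sin θ : ℝ):ℂ)*I := by
    rw [Complex.exp_mul_I, ← Complex.ofReal_cos, ← Complex.ofReal_sin]
    push_cast; ring
  rw [e, Complex.normSq_add_mul_I]
  have := Real.sin_sq_add_cos_sq θ
  nlinarith

lemma frontier_lune (R : ℝ) (hR : 0 < R) (c₁ c₂ : ℂ) :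
    frontier (closedBall c₁ R ∩ closedBall c₂ R)
      = (sphere c₁ R ∩ closedBall c₂ R) ∪ (sphere c₂ R ∩ closedBall c₁ R) := by
  apply Subset.antisymm
  · refine (frontier_inter_subset _ _).trans ?_
    rw [frontier_closedBall', frontier_closedBall',
      IsClosed.closure_eq Metric.isClosed_closedBall,
      IsClosed.closure_eq Metric.isClosed_closedBall]
    rintro x (h | h)
    · exact Or.inl h
    · exact Or.inr ⟨h.2, h.1⟩
  · have hint : interior (closedBall c₁ R ∩ closedBall c₂ R)
        ⊆ ball c₁ R ∩ ball c₂ R := by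
      rw [← interior_closedBall' c₁ R, ← interior_closedBall' c₂ R]
      rw [← interior_inter]
    rintro x (⟨hs, hb⟩ | ⟨hs, hb⟩)
    · constructor
      · exact subset_closure ⟨sphere_subset_closedBall hs, hb⟩
      · intro hx
        have := (hint hx).1
        rw [mem_ball] at this
        rw [mem_sphere] at hs
        linarith
    · constructor
      · exact subset_closure ⟨hb, sphere_subset_closedBall hs⟩
      · intro hx
        have := (hint hx).2
        rw [mem_ball] at this
        rw [mem_sphere] at hs
        linarith

lemma arc_char (R : ℝ) (hR : 0 < R) (c₁ c₂ : ℂ) (hne : c₁ ≠ c₂)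
    (hlt : dist c₁ c₂ < 2*R) :
    sphere c₁ R ∩ closedBall c₂ R
      = (fun θ : ℝ => c₁ + ((c₂ - c₁) / ((‖c₂ - c₁‖ : ℝ) : ℂ))
          * ((R:ℂ) * Complex.exp (θ * I)))
        '' Icc (-(Real.arccos (dist c₁ c₂/(2*R)))) (Real.arccos (dist c₁ c₂/(2*R))) := by
  set d : ℝ := dist c₁ c₂ with hd
  have hd' : d = ‖c₂ - c₁‖ := by
    rw [hd, dist_comm, Complex.dist_eq]
  have hd0 : 0 < d := by
    rw [hd, dist_pos]; exact hne
  set α : ℝ := Real.arccos (d/(2*R)) with hα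
  have hrat0 : 0 ≤ d/(2*R) := by positivity
  have hrat1 : d/(2*R) < 1 := by rw [div_lt_one (by linarith)]; linarith
  have hcosα : Real.cos α = d/(2*R) := Real.cos_arccos (by linarith) (by linarith)
  have hα0 : 0 ≤ α := Real.arccos_nonneg _
  have hαπ : α ≤ π := Real.arccos_le_pi _
  set u : ℂ := (c₂ - c₁) / ((‖c₂ - c₁‖ : ℝ) : ℂ) with hu
  have habs : ((‖c₂ - c₁‖ : ℝ) : ℂ) ≠ 0 := by
    rw [Complex.ofReal_ne_zero, ← hd']
    exact hd0.ne'
  have hu1 : ‖u‖ = 1 := by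
    rw [hu, norm_div, Complex.norm_real, norm_norm, div_self]
    rw [← hd']; exact hd0.ne'
  have hu0 : u ≠ 0 := by
    intro h; rw [h] at hu1; simp at hu1
  have hc₂ : c₂ = c₁ + (d:ℂ) * u := by
    have h' : (d:ℂ) * u = c₂ - c₁ := by
      rw [hu, hd']
      field_simp
    rw [h']; ring
  -- key: for z, dist (c₁ + u*z) c₂ = abs (z - d)
  have hdist2 : ∀ z : ℂ, dist (c₁ + u*z) c₂ = ‖z - (d:ℂ)‖ := by
    intro z
    rw [Complex.dist_eq, hc₂]
    have : c₁ + u*z - (c₁ + (d:ℂ)*u) = u * (z - (d:ℂ)) := by ring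
    rw [this, norm_mul, hu1, one_mul]
  have hdist1 : ∀ z : ℂ, dist (c₁ + u*z) c₁ = ‖z‖ := by
    intro z
    rw [Complex.dist_eq]
    have : c₁ + u*z - c₁ = u * z := by ring
    rw [this, norm_mul, hu1, one_mul]
  ext p
  constructor
  · rintro ⟨hs, hb⟩
    set q : ℂ := (p - c₁) / u with hq
    have hpq : p = c₁ + u * q := by
      rw [hq]; field_simp; ring
    have habsq : ‖q‖ = R := by
      rw [hq, norm_div, hu1, div_one, ← Complex.dist_eq, ← mem_sphere]
      exact hs
    set θ : ℝ := Complex.arg q with hθ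
    have hq0 : q ≠ 0 := by
      intro h; rw [h] at habsq; simp at habsq; linarith
    have hqexp : q = (R:ℂ) * Complex.exp (θ*I) := by
      conv_lhs => rw [← Complex.norm_mul_exp_arg_mul_I q]
      rw [habsq, hθ]
    have hθπ : -π ≤ θ ∧ θ ≤ π := ⟨(Complex.neg_pi_lt_arg q).le, Complex.arg_le_pi q⟩
    have hcos : d/(2*R) ≤ Real.cos θ := by
      have hb' : ‖q - (d:ℂ)‖ ≤ R := by
        rw [← hdist2 q, ← hpq]; exact hb
      rw [hqexp] at hb'
      rw [abs_le_iff_normSq hR.le, normSq_R_exp_sub] at hb'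
      rw [div_le_iff₀ (by linarith : (0:ℝ) < 2*R)]
      nlinarith
    have hθα : θ ∈ Icc (-α) α := by
      constructor
      · by_contra hcon
        push_neg at hcon
        have h1 : α < |θ| := by rw [abs_of_nonpos (by linarith)]; linarith
        have h2 : Real.cos (|θ|) < Real.cos α :=
          Real.cos_lt_cos_of_nonneg_of_le_pi hα0 (by rw [abs_of_nonpos (by linarith)]; linarith) h1
        rw [Real.cos_abs] at h2
        rw [hcosα] at h2
        linarith
      · by_contra hcon
        push_neg at hcon
        have h2 : Real.cos θ < Real.cos α :=
          Real.cos_lt_cos_of_nonneg_of_le_pi hα0 hθπ.2 hcon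
        rw [hcosα] at h2
        linarith
    refine ⟨θ, hθα, ?_⟩
    show c₁ + u * ((R:ℂ) * Complex.exp ((θ:ℝ) * I)) = p
    rw [← hqexp]; exact hpq.symm
  · rintro ⟨θ, hθ, rfl⟩
    have hcos : d/(2*R) ≤ Real.cos θ := by
      have h1 : |θ| ≤ α := abs_le.2 ⟨hθ.1, hθ.2⟩
      have := Real.cos_le_cos_of_nonneg_of_le_pi (abs_nonneg θ) hαπ h1
      rw [Real.cos_abs] at this
      rw [hcosα] at this
      linarith
    constructor
    · rw [mem_sphere, hdist1, norm_mul, Complex.norm_real, Real.norm_eq_abs, abs_of_pos hR,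
        Complex.norm_exp_ofReal_mul_I, mul_one]
    · rw [mem_closedBall, hdist2, abs_le_iff_normSq hR.le, normSq_R_exp_sub]
      have hcos' : d ≤ 2*R*Real.cos θ := by
        rw [div_le_iff₀ (by linarith : (0:ℝ) < 2*R)] at hcos
        linarith
      nlinarith [hcos', hd0]

lemma sphere_char (R : ℝ) (hR : 0 < R) (c : ℂ) :
    sphere c R = (fun θ : ℝ => c + 1 * ((R:ℂ) * Complex.exp (θ * I))) '' Icc (-π) π := by
  ext p
  constructor
  · intro hs
    set q : ℂ := p - c with hq
    have habsq : ‖q‖ = R := by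
      rw [hq, ← Complex.dist_eq, ← mem_sphere]; exact hs
    refine ⟨Complex.arg q, ⟨(Complex.neg_pi_lt_arg q).le, Complex.arg_le_pi q⟩, ?_⟩
    have hqexp : q = (R:ℂ) * Complex.exp (Complex.arg q*I) := by
      conv_lhs => rw [← Complex.norm_mul_exp_arg_mul_I q]
      rw [habsq]
    show c + 1 * ((R:ℂ) * Complex.exp ((q.arg:ℝ) * I)) = p
    rw [one_mul, ← hqexp, hq]
    ring
  · rintro ⟨θ, _, rfl⟩
    rw [mem_sphere, Complex.dist_eq]
    have : c + 1 * ((R:ℂ) * Complex.exp (θ*I)) - c = (R:ℂ) * Complex.exp (θ*I) := by ring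
    rw [this, norm_mul, Complex.norm_real, Real.norm_eq_abs, abs_of_pos hR, Complex.norm_exp_ofReal_mul_I, mul_one]

lemma inter_spheres_finite (R : ℝ) (hR : 0 < R) (c₁ c₂ : ℂ) (hne : c₁ ≠ c₂)
    (hlt : dist c₁ c₂ < 2*R) :
    μH[1] ((sphere c₁ R ∩ closedBall c₂ R) ∩ (sphere c₂ R ∩ closedBall c₁ R)) = 0 := by
  haveI : NullSingletonClass (μH[1] : Measure ℂ) := MeasureTheory.Measure.nullSingletonClass_hausdorff ℂ one_pos
  set d : ℝ := dist c₁ c₂ with hd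
  have hd' : d = ‖c₂ - c₁‖ := by rw [hd, dist_comm, Complex.dist_eq]
  have hd0 : 0 < d := by rw [hd, dist_pos]; exact hne
  set u : ℂ := (c₂ - c₁) / ((‖c₂ - c₁‖ : ℝ) : ℂ) with hu
  have hu1 : ‖u‖ = 1 := by
    rw [hu, norm_div, Complex.norm_real, norm_norm, div_self]
    rw [← hd']; exact hd0.ne'
  have hu0 : u ≠ 0 := by intro h; rw [h] at hu1; simp at hu1
  have habs : ((‖c₂ - c₁‖ : ℝ) : ℂ) ≠ 0 := by
    rw [Complex.ofReal_ne_zero, ← hd']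
    exact hd0.ne'
  have hc₂ : c₂ = c₁ + (d:ℂ) * u := by
    have h' : (d:ℂ) * u = c₂ - c₁ := by
      rw [hu, hd']
      field_simp
    rw [h']; ring
  set s : ℝ := Real.sqrt (R^2 - d^2/4) with hs
  have hs2 : s^2 = R^2 - d^2/4 := Real.sq_sqrt (by nlinarith)
  have hpair : (sphere c₁ R ∩ closedBall c₂ R) ∩ (sphere c₂ R ∩ closedBall c₁ R)
      ⊆ {c₁ + u * (((d/2 : ℝ):ℂ) + (s:ℝ)*I), c₁ + u * (((d/2 : ℝ):ℂ) - (s:ℝ)*I)} := by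
    rintro p ⟨⟨h1, _⟩, ⟨h2, _⟩⟩
    set ζ : ℂ := (p - c₁) / u with hζ
    have hpζ : p = c₁ + u * ζ := by rw [hζ]; field_simp; ring
    have habs1 : ‖ζ‖ = R := by
      rw [hζ, norm_div, hu1, div_one, ← Complex.dist_eq, ← mem_sphere]; exact h1
    have habs2 : ‖ζ - (d:ℂ)‖ = R := by
      have : ζ - (d:ℂ) = (p - c₂)/u := by
        rw [hζ, hc₂]; field_simp; ring
      rw [this, norm_div, hu1, div_one, ← Complex.dist_eq, ← mem_sphere]; exact h2
    have hn1 : Complex.normSq ζ = R^2 := by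
      rw [← Complex.sq_norm, habs1]
    have hn2 : Complex.normSq (ζ - (d:ℂ)) = R^2 := by
      rw [← Complex.sq_norm, habs2]
    rw [Complex.normSq_apply] at hn1
    have hre : ζ.re = d/2 := by
      rw [Complex.normSq_apply] at hn2
      simp only [Complex.sub_re, Complex.sub_im, Complex.ofReal_re, Complex.ofReal_im,
        sub_zero] at hn2
      nlinarith
    have him : ζ.im = s ∨ ζ.im = -s := by
      have h : ζ.im * ζ.im = s * s := by nlinarith
      exact mul_self_eq_mul_self_iff.1 h
    have hζeq : ζ = (ζ.re : ℂ) + (ζ.im : ℂ)*I := (Complex.re_add_im ζ).symm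
    rcases him with h | h
    · have heq : p = c₁ + u * (((d/2 : ℝ):ℂ) + (s:ℝ)*I) := by
        rw [hpζ, hζeq, hre, h]
      rw [heq]; exact Set.mem_insert _ _
    · have heq : p = c₁ + u * (((d/2 : ℝ):ℂ) - (s:ℝ)*I) := by
        rw [hpζ, hζeq, hre, h]; push_cast; ring
      rw [heq]; exact Set.mem_insert_of_mem _ rfl
  refine le_antisymm ?_ (zero_le)
  calc μH[1] ((sphere c₁ R ∩ closedBall c₂ R) ∩ (sphere c₂ R ∩ closedBall c₁ R))
      ≤ μH[1] ({c₁ + u * (((d/2 : ℝ):ℂ) + (s:ℝ)*I)} ∪ {c₁ + u * (((d/2 : ℝ):ℂ) - (s:ℝ)*I)}) := by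
        apply measure_mono
        intro x hx
        rcases hpair hx with h | h
        · exact Or.inl h
        · exact Or.inr h
    _ ≤ μH[1] {c₁ + u * (((d/2 : ℝ):ℂ) + (s:ℝ)*I)} + μH[1] {c₁ + u * (((d/2 : ℝ):ℂ) - (s:ℝ)*I)} :=
        measure_union_le _ _
    _ = 0 := by rw [measure_singleton, measure_singleton, add_zero]


lemma abs_unit (c₁ c₂ : ℂ) (hne : c₁ ≠ c₂) :
    ‖(c₂ - c₁) / ((‖c₂ - c₁‖ : ℝ) : ℂ)‖ = 1 := by
  have h0 : ‖c₂ - c₁‖ ≠ 0 := by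
    simp [sub_eq_zero]
    exact fun h => hne h.symm
  rw [norm_div, Complex.norm_real, norm_norm, div_self h0]

lemma lune_complex (R : ℝ) (hR : 0 < R) (c₁ c₂ : ℂ) (hlt : dist c₁ c₂ < 2*R) :
    μH[1] (frontier (closedBall c₁ R ∩ closedBall c₂ R))
      = ENNReal.ofReal (4*R*Real.arccos (dist c₁ c₂/(2*R))) := by
  haveI : NullSingletonClass (μH[1] : Measure ℂ) := MeasureTheory.Measure.nullSingletonClass_hausdorff ℂ one_pos
  rcases eq_or_ne c₁ c₂ with rfl | hne
  · rw [Set.inter_self, frontier_closedBall', sphere_char R hR c₁,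
      arc_measure R hR c₁ 1 (by simp) (by linarith [Real.pi_pos]) (by linarith),
      dist_self, zero_div, Real.arccos_zero]
    congr 1
    ring
  · have hd0 : 0 < dist c₁ c₂ := dist_pos.2 hne
    have hα0 : 0 ≤ Real.arccos (dist c₁ c₂/(2*R)) := Real.arccos_nonneg _
    have hαπ : Real.arccos (dist c₁ c₂/(2*R)) ≤ π := Real.arccos_le_pi _
    have hA₁ : μH[1] (sphere c₁ R ∩ closedBall c₂ R)
        = ENNReal.ofReal (2*R*Real.arccos (dist c₁ c₂/(2*R))) := by
      rw [arc_char R hR c₁ c₂ hne hlt,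
        arc_measure R hR c₁ _ (abs_unit c₁ c₂ hne) (by linarith) (by linarith [Real.pi_pos])]
      congr 1
      ring
    have hA₂ : μH[1] (sphere c₂ R ∩ closedBall c₁ R)
        = ENNReal.ofReal (2*R*Real.arccos (dist c₁ c₂/(2*R))) := by
      have hlt' : dist c₂ c₁ < 2*R := by rwa [dist_comm]
      have hα0' : 0 ≤ Real.arccos (dist c₂ c₁/(2*R)) := Real.arccos_nonneg _
      have hαπ' : Real.arccos (dist c₂ c₁/(2*R)) ≤ π := Real.arccos_le_pi _
      rw [arc_char R hR c₂ c₁ hne.symm hlt',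
        arc_measure R hR c₂ _ (abs_unit c₂ c₁ hne.symm) (by linarith) (by linarith [Real.pi_pos])]
      rw [dist_comm c₂ c₁]
      congr 1
      ring
    rw [frontier_lune R hR c₁ c₂]
    have hnull := inter_spheres_finite R hR c₁ c₂ hne hlt
    have hmeasA₂ : MeasurableSet (sphere c₂ R ∩ closedBall c₁ R) :=
      (Metric.isClosed_sphere.inter Metric.isClosed_closedBall).measurableSet
    have hsplit : μH[1] ((sphere c₁ R ∩ closedBall c₂ R) ∪ (sphere c₂ R ∩ closedBall c₁ R))
        = μH[1] (sphere c₁ R ∩ closedBall c₂ R) + μH[1] (sphere c₂ R ∩ closedBall c₁ R) := by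
      rw [← Set.diff_union_self,
        measure_union disjoint_sdiff_self_left hmeasA₂,
        ← Set.diff_self_inter, measure_diff_null hnull]
    rw [hsplit, hA₁, hA₂, ← ENNReal.ofReal_add (by positivity) (by positivity)]
    congr 1
    ring

end LuneAux


open LuneAux in
/-- **Perimeter of a Euclidean lune.**
The boundary length (one-dimensional Hausdorff measure of the frontier) of the intersection
of two closed disks of radius `R` in the Euclidean plane whose centers are at distance
`d < 2R` equals `4·R·arccos (d/(2R))`. -/
theorem perimeter_of_euclidean_lune
    (R : ℝ) (hR : 0 < R)
    (c₁ c₂ : EuclideanSpace ℝ (Fin 2)) (d : ℝ) (hd : d = dist c₁ c₂) (hd2 : d < 2 * R)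
    (D : Set (EuclideanSpace ℝ (Fin 2)))
    (hD : D = Metric.closedBall c₁ R ∩ Metric.closedBall c₂ R) :
    μH[1] (frontier D) = ENNReal.ofReal (4 * R * Real.arccos (d / (2 * R))) := by
  subst hd hD
  set φ : EuclideanSpace ℝ (Fin 2) ≃ᵢ ℂ :=
    (Complex.orthonormalBasisOneI.repr.toIsometryEquiv).symm with hφ
  have h1 : μH[1] (frontier (Metric.closedBall c₁ R ∩ Metric.closedBall c₂ R))
      = μH[1] (φ '' frontier (Metric.closedBall c₁ R ∩ Metric.closedBall c₂ R)) :=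
    (φ.hausdorffMeasure_image 1 _).symm
  have h3 : φ '' frontier (Metric.closedBall c₁ R ∩ Metric.closedBall c₂ R)
      = frontier (φ '' (Metric.closedBall c₁ R ∩ Metric.closedBall c₂ R)) := by
    simpa using φ.toHomeomorph.image_frontier (Metric.closedBall c₁ R ∩ Metric.closedBall c₂ R)
  rw [h1, h3, Set.image_inter φ.injective, φ.image_closedBall, φ.image_closedBall]
  have h2 : dist c₁ c₂ = dist (φ c₁) (φ c₂) := (φ.dist_eq c₁ c₂).symm
  rw [h2]
  exact LuneAux.lune_complex R hR (φ c₁) (φ c₂) (by rw [← h2]; exact hd2)
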